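/- Let α, β, γ be regular languages with ε ∉ α and ε ∉ β. Any language L satisfying L = α·L + L·β + γ and minimal among such solutions is regular. -/

import Mathlib

open Set
open scoped Computability

namespace Stmt16Aux

variable {T : Type*}

/-- Product DFA for union. -/
def unionDFA {σ1 σ2 : Type} (M1 : DFA T σ1) (M2 : DFA T σ2) : DFA T (σ1 × σ2) where
  step p a := (M1.step p.1 a, M2.step p.2 a)
  start := (M1.start, M2.start)
  accept := {p | p.1 ∈ M1.accept ∨ p.2 ∈ M2.accept}

lemma unionDFA_evalFrom {σ1 σ2 : Type} (M1 : DFA T σ1) (M2 : DFA T σ2)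
    (s1 : σ1) (s2 : σ2) (x : List T) :
    (unionDFA M1 M2).evalFrom (s1, s2) x = (M1.evalFrom s1 x, M2.evalFrom s2 x) := by
  induction x generalizing s1 s2 with
  | nil => rfl
  | cons a x ih => simpa [DFA.evalFrom, unionDFA] using ih _ _

lemma unionDFA_accepts {σ1 σ2 : Type} (M1 : DFA T σ1) (M2 : DFA T σ2) :
    (unionDFA M1 M2).accepts = M1.accepts + M2.accepts := by
  ext x
  rw [DFA.mem_accepts, Language.mem_add, DFA.mem_accepts, DFA.mem_accepts]
  show (unionDFA M1 M2).evalFrom (M1.start, M2.start) x ∈ _ ↔ _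
  rw [unionDFA_evalFrom]
  rfl

lemma isRegular_add {l m : Language T} (hl : l.IsRegular) (hm : m.IsRegular) :
    (l + m).IsRegular := by
  obtain ⟨σ1, _, M1, rfl⟩ := hl
  obtain ⟨σ2, _, M2, rfl⟩ := hm
  exact ⟨σ1 × σ2, inferInstance, unionDFA M1 M2, unionDFA_accepts M1 M2⟩

def oneDFA (T : Type*) : DFA T Bool where
  step _ _ := false
  start := true
  accept := {true}

lemma oneDFA_evalFrom_false (x : List T) : (oneDFA T).evalFrom false x = false := by
  induction x with
  | nil => rfl
  | cons a x ih => simpa [DFA.evalFrom, oneDFA] using ih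

lemma oneDFA_accepts : (oneDFA T).accepts = 1 := by
  ext x
  cases x with
  | nil => simp [DFA.mem_accepts, DFA.eval, oneDFA, Language.mem_one]
  | cons a x =>
    rw [DFA.mem_accepts, Language.mem_one]
    show (oneDFA T).evalFrom false x ∈ _ ↔ _
    rw [oneDFA_evalFrom_false]
    simp [oneDFA]

def concatDFA {σ1 σ2 : Type} (M1 : DFA T σ1) (M2 : DFA T σ2) : DFA T (σ1 × Set σ2) where
  step p a := (M1.step p.1 a,
    (fun q => M2.step q a) '' p.2 ∪ {q | M1.step p.1 a ∈ M1.accept ∧ q = M2.start})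
  start := (M1.start, {q | M1.start ∈ M1.accept ∧ q = M2.start})
  accept := {p | ∃ q ∈ p.2, q ∈ M2.accept}

lemma concatDFA_eval {σ1 σ2 : Type} (M1 : DFA T σ1) (M2 : DFA T σ2) (x : List T) :
    (concatDFA M1 M2).eval x =
      (M1.eval x, {q | ∃ a b, a ++ b = x ∧ a ∈ M1.accepts ∧ q = M2.evalFrom M2.start b}) := by
  induction x using List.reverseRecOn with
  | nil =>
    show (concatDFA M1 M2).start = _
    refine Prod.ext rfl ?_
    ext q
    show (M1.start ∈ M1.accept ∧ q = M2.start) ↔ _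
    constructor
    · rintro ⟨h, rfl⟩
      exact ⟨[], [], rfl, by rwa [DFA.mem_accepts], rfl⟩
    · rintro ⟨a, b, hab, ha, rfl⟩
      obtain ⟨rfl, rfl⟩ := List.append_eq_nil_iff.mp hab
      rw [DFA.mem_accepts] at ha
      exact ⟨ha, rfl⟩
  | append_singleton x c ih =>
    rw [DFA.eval_append_singleton, ih, DFA.eval_append_singleton]
    refine Prod.ext rfl ?_
    ext q
    show q ∈ (fun q => M2.step q c) '' _ ∪ {q | _ ∈ M1.accept ∧ q = M2.start} ↔ _
    simp only [mem_union, mem_image, mem_setOf_eq]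
    constructor
    · rintro (⟨q', ⟨a, b, hab, ha, rfl⟩, rfl⟩ | ⟨h, rfl⟩)
      · exact ⟨a, b ++ [c], by rw [← List.append_assoc, hab], ha,
          (M2.evalFrom_append_singleton _ _ _).symm⟩
      · refine ⟨x ++ [c], [], by simp, ?_, (M2.evalFrom_nil _).symm⟩
        rw [DFA.mem_accepts, DFA.eval_append_singleton]
        exact h
    · rintro ⟨a, b, hab, ha, rfl⟩
      rcases List.eq_nil_or_concat b with rfl | ⟨b', c', rfl⟩
      · rw [List.append_nil] at hab
        subst hab
        rw [DFA.mem_accepts, DFA.eval_append_singleton] at ha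
        exact Or.inr ⟨ha, (M2.evalFrom_nil _)⟩
      · rw [List.concat_eq_append, ← List.append_assoc] at hab
        obtain ⟨rfl, hc⟩ := List.append_inj' hab rfl
        obtain rfl : c' = c := by simpa using hc
        exact Or.inl ⟨M2.evalFrom M2.start b', ⟨a, b', rfl, ha, rfl⟩,
          by rw [List.concat_eq_append, M2.evalFrom_append_singleton]⟩

lemma concatDFA_accepts {σ1 σ2 : Type} (M1 : DFA T σ1) (M2 : DFA T σ2) :
    (concatDFA M1 M2).accepts = M1.accepts * M2.accepts := by
  ext x
  rw [DFA.mem_accepts, Language.mem_mul]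
  show (concatDFA M1 M2).eval x ∈ {p | ∃ q ∈ p.2, q ∈ M2.accept} ↔ _
  rw [concatDFA_eval]
  constructor
  · rintro ⟨q, ⟨a, b, hab, ha, rfl⟩, hq⟩
    exact ⟨a, ha, b, by rwa [DFA.mem_accepts], hab⟩
  · rintro ⟨a, ha, b, hb, hab⟩
    exact ⟨M2.evalFrom M2.start b, ⟨a, b, hab, ha, rfl⟩, by rwa [DFA.mem_accepts] at hb⟩

lemma isRegular_mul {l m : Language T} (hl : l.IsRegular) (hm : m.IsRegular) :
    (l * m).IsRegular := by
  obtain ⟨σ1, _, M1, rfl⟩ := hl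
  obtain ⟨σ2, _, M2, rfl⟩ := hm
  exact ⟨σ1 × Set σ2, inferInstance, concatDFA M1 M2, concatDFA_accepts M1 M2⟩


lemma exists_last_chunk {l : Language T} {x : List T} (hx : x ∈ l∗) (hne : x ≠ []) :
    ∃ a ∈ l∗, ∃ b ∈ l, b ≠ [] ∧ a ++ b = x := by
  obtain ⟨S, rfl, hS⟩ := Language.mem_kstar_iff_exists_nonempty.mp hx
  rcases List.eq_nil_or_concat S with rfl | ⟨S', y, rfl⟩
  · simp at hne
  · refine ⟨S'.flatten, Language.join_mem_kstar fun z hz => (hS z (by simp [hz])).1,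
      y, (hS y (by simp)).1, (hS y (by simp)).2, by simp⟩

def starDFA {σ : Type} (M : DFA T σ) : DFA T (Set σ) where
  step S a := (fun q => M.step q a) '' S ∪
    {q | (∃ q' ∈ S, M.step q' a ∈ M.accept) ∧ q = M.start}
  start := {M.start}
  accept := {S | ∃ q ∈ S, q ∈ M.accept}

lemma starDFA_eval {σ : Type} (M : DFA T σ) (x : List T) :
    (starDFA M).eval x =
      {q | ∃ a b, a ++ b = x ∧ a ∈ M.accepts∗ ∧ q = M.evalFrom M.start b} := by
  induction x using List.reverseRecOn with
  | nil =>
    show {M.start} = _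
    ext q
    simp only [mem_singleton_iff, mem_setOf_eq]
    constructor
    · rintro rfl
      exact ⟨[], [], rfl, Language.nil_mem_kstar _, rfl⟩
    · rintro ⟨a, b, hab, _, rfl⟩
      obtain ⟨rfl, rfl⟩ := List.append_eq_nil_iff.mp hab
      rfl
  | append_singleton x c ih =>
    rw [DFA.eval_append_singleton, ih]
    ext q
    show q ∈ (fun q => M.step q c) '' _ ∪ {q | (∃ q' ∈ _, _) ∧ q = M.start} ↔ _
    simp only [mem_union, mem_image, mem_setOf_eq]
    constructor
    · rintro (⟨q', ⟨a, b, hab, ha, rfl⟩, rfl⟩ | ⟨⟨q', ⟨a, b', hab, ha, rfl⟩, hstep⟩, rfl⟩)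
      · exact ⟨a, b ++ [c], by rw [← List.append_assoc, hab], ha,
          (M.evalFrom_append_singleton _ _ _).symm⟩
      · refine ⟨x ++ [c], [], by simp, ?_, (M.evalFrom_nil _).symm⟩
        have hb : b' ++ [c] ∈ M.accepts := by
          rw [DFA.mem_accepts, DFA.eval, M.evalFrom_append_singleton]
          exact hstep
        obtain ⟨S, rfl, hS⟩ := Language.mem_kstar.mp ha
        have : S.flatten ++ (b' ++ [c]) = (S ++ [b' ++ [c]]).flatten := by simp
        rw [← hab, List.append_assoc, this]
        exact Language.join_mem_kstar fun y hy => by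
          rcases List.mem_append.mp hy with h | h
          · exact hS y h
          · simp only [List.mem_singleton] at h; subst h; exact hb
    · rintro ⟨a, b, hab, ha, rfl⟩
      rcases List.eq_nil_or_concat b with rfl | ⟨b', c', rfl⟩
      · rw [List.append_nil] at hab
        subst hab
        obtain ⟨a', ha', y, hy, hyne, hay⟩ := exists_last_chunk ha (by simp)
        obtain ⟨y', c'', rfl⟩ := (List.eq_nil_or_concat y).resolve_left hyne
        rw [List.concat_eq_append, ← List.append_assoc] at hay
        obtain ⟨hx', hc⟩ := List.append_inj' hay rfl
        obtain rfl : c'' = c := by simpa using hc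
        refine Or.inr ⟨⟨M.evalFrom M.start y', ⟨a', y', hx', ha', rfl⟩, ?_⟩,
          (M.evalFrom_nil _)⟩
        rw [← M.evalFrom_append_singleton]
        rw [DFA.mem_accepts, List.concat_eq_append] at hy
        exact hy
      · rw [List.concat_eq_append, ← List.append_assoc] at hab
        obtain ⟨rfl, hc⟩ := List.append_inj' hab rfl
        obtain rfl : c' = c := by simpa using hc
        exact Or.inl ⟨M.evalFrom M.start b', ⟨a, b', rfl, ha, rfl⟩,
          by rw [List.concat_eq_append, M.evalFrom_append_singleton]⟩

lemma starDFA_accepts {σ : Type} (M : DFA T σ) :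
    (starDFA M).accepts = M.accepts∗ * M.accepts := by
  ext x
  rw [DFA.mem_accepts, Language.mem_mul]
  show (starDFA M).eval x ∈ {S | ∃ q ∈ S, q ∈ M.accept} ↔ _
  rw [starDFA_eval]
  constructor
  · rintro ⟨q, ⟨a, b, hab, ha, rfl⟩, hq⟩
    exact ⟨a, ha, b, by rwa [DFA.mem_accepts], hab⟩
  · rintro ⟨a, ha, b, hb, hab⟩
    exact ⟨M.evalFrom M.start b, ⟨a, b, hab, ha, rfl⟩, by rwa [DFA.mem_accepts] at hb⟩


lemma isRegular_kstar {l : Language T} (hl : l.IsRegular) : (l∗).IsRegular := by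
  obtain ⟨σ, _, M, rfl⟩ := hl
  have h1 : (1 : Language T).IsRegular := ⟨Bool, inferInstance, oneDFA T, oneDFA_accepts⟩
  have h2 : (M.accepts∗ * M.accepts).IsRegular :=
    ⟨Set σ, inferInstance, starDFA M, starDFA_accepts M⟩
  have h3 := isRegular_add h2 h1
  rwa [add_comm, Language.one_add_kstar_mul_self_eq_kstar] at h3

end Stmt16Aux

theorem stmt_16 {T : Type*} [Fintype T] (α β γ L : Language T)
    (hα : α.IsRegular) (hβ : β.IsRegular) (hγ : γ.IsRegular)
    (hαε : [] ∉ α) (hβε : [] ∉ β)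
    (hL : L = α * L + L * β + γ)
    (hmin : ∀ z : Language T, z = α * z + z * β + γ → L ≤ z) :
    L.IsRegular := by
  set K : Language T := α∗ * γ * β∗ with hK
  -- basic inequalities from hL
  have hαL : α * L ≤ L := by
    conv_rhs => rw [hL]
    rw [add_eq_sup, add_eq_sup]
    exact le_sup_of_le_left le_sup_left
  have hLβ : L * β ≤ L := by
    conv_rhs => rw [hL]
    rw [add_eq_sup, add_eq_sup]
    exact le_sup_of_le_left le_sup_right
  have hγL : γ ≤ L := by
    conv_rhs => rw [hL]
    rw [add_eq_sup, add_eq_sup]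
    exact le_sup_right
  have hγβK : γ * β∗ ≤ K := by
    rw [hK, ← one_mul (γ * β∗), ← mul_assoc]
    exact mul_le_mul' (mul_le_mul' one_le_kstar le_rfl) le_rfl
  -- K ≤ L
  have hLβs : L * β∗ ≤ L := mul_kstar_le_self hLβ
  have hγβs : γ * β∗ ≤ L := (mul_le_mul' hγL le_rfl).trans hLβs
  have hαsL : α∗ * L ≤ L := kstar_mul_le_self hαL
  have hKL : K ≤ L := by
    rw [hK, mul_assoc]
    exact (mul_le_mul' (le_refl (α∗)) hγβs).trans hαsL
  -- K satisfies the equation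
  have hKeq : K = α * K + K * β + γ := by
    apply le_antisymm
    · have e1 : K = γ * β∗ + α * K := by
        conv_lhs => rw [hK, ← Language.one_add_self_mul_kstar_eq_kstar α]
        rw [add_mul, add_mul, one_mul, mul_assoc α α∗ γ, ← mul_assoc α (α∗ * γ) (β∗)]
      have e2 : γ * β∗ ≤ γ + K * β := by
        conv_lhs => rw [← Language.one_add_kstar_mul_self_eq_kstar β]
        rw [mul_add, mul_one, ← mul_assoc]
        rw [add_eq_sup, add_eq_sup]
        exact sup_le_sup_left (mul_le_mul' hγβK le_rfl) γ
      calc K = γ * β∗ + α * K := e1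
        _ ≤ (γ + K * β) + α * K := by
            rw [add_eq_sup, add_eq_sup]
            exact sup_le_sup_right e2 _
        _ = α * K + K * β + γ := by
            rw [add_comm (γ + K * β) (α * K), add_comm γ (K * β), ← add_assoc]
    · have h1 : α * K ≤ K := by
        rw [hK, ← mul_assoc, ← mul_assoc]
        exact mul_le_mul'
          (mul_le_mul' mul_kstar_le_kstar le_rfl) le_rfl
      have h2 : K * β ≤ K := by
        conv_lhs => rw [hK, mul_assoc]
        rw [hK]
        exact mul_le_mul' le_rfl kstar_mul_le_kstar
      have h3 : γ ≤ K := by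
        calc γ = 1 * γ * 1 := by rw [one_mul, mul_one]
          _ ≤ K := by
              rw [hK]
              exact mul_le_mul' (mul_le_mul' one_le_kstar le_rfl)
                one_le_kstar
      rw [add_eq_sup, add_eq_sup]
      exact sup_le (sup_le h1 h2) h3
  have hLK : L = K := le_antisymm (hmin K hKeq) hKL
  rw [hLK, hK]
  exact Stmt16Aux.isRegular_mul
    (Stmt16Aux.isRegular_mul (Stmt16Aux.isRegular_kstar hα) hγ)
    (Stmt16Aux.isRegular_kstar hβ)
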